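/- Let d ≥ 1 and ℓ ≥ 2 be integers, and set N = (d−1)ℓ + 2 and r = gcd(d+1, ℓ−1). Then gcd(N, r·(d−1)) = gcd(d+1, 2(ℓ−1)). -/

import Mathlib

/-- For integers `d ≥ 1`, `ℓ ≥ 2`, with `N = (d−1)ℓ + 2` and
`r = gcd(d+1, ℓ−1)`, one has `gcd(N, r·(d−1)) = gcd(d+1, 2(ℓ−1))`. -/
theorem gcd_N_eq_gcd (d ℓ : ℤ) (hd : 1 ≤ d) (hl : 2 ≤ ℓ)
    (N r : ℤ) (hN : N = (d - 1) * ℓ + 2)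
    (hr : r = Int.gcd (d + 1) (ℓ - 1)) :
    Int.gcd N (r * (d - 1)) = Int.gcd (d + 1) (2 * (ℓ - 1)) := by
  apply Nat.dvd_antisymm
  · -- forward: m ∣ d+1 and m ∣ 2(ℓ-1)
    rw [← Int.natCast_dvd_natCast]
    set m : ℤ := (Int.gcd N (r * (d - 1)) : ℤ) with hm
    have hm1 : m ∣ N := Int.gcd_dvd_left _ _
    have hm2 : m ∣ r * (d - 1) := Int.gcd_dvd_right _ _
    have hrL : r ∣ ℓ - 1 := hr ▸ Int.gcd_dvd_right _ _
    have hm3 : m ∣ (ℓ - 1) * (d - 1) := hm2.trans (mul_dvd_mul_right hrL (d - 1))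
    have hA : m ∣ d + 1 := by
      have : m ∣ N - (ℓ - 1) * (d - 1) := dvd_sub hm1 hm3
      have e : N - (ℓ - 1) * (d - 1) = d + 1 := by rw [hN]; ring
      rwa [e] at this
    have hB : m ∣ 2 * (ℓ - 1) := by
      have h4 : m ∣ (d + 1) * (ℓ - 1) := hA.mul_right _
      have h5 : m ∣ (d + 1) * (ℓ - 1) - (ℓ - 1) * (d - 1) := dvd_sub h4 hm3
      have e : (d + 1) * (ℓ - 1) - (ℓ - 1) * (d - 1) = 2 * (ℓ - 1) := by ring
      rwa [e] at h5
    exact Int.dvd_coe_gcd hA hB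
  · rw [← Int.natCast_dvd_natCast]
    set k : ℤ := (Int.gcd (d + 1) (2 * (ℓ - 1)) : ℤ) with hk
    have hk1 : k ∣ d + 1 := Int.gcd_dvd_left _ _
    have hk2 : k ∣ 2 * (ℓ - 1) := Int.gcd_dvd_right _ _
    have hkN : k ∣ N := by
      have : k ∣ (d + 1) * (ℓ - 1) - 2 * (ℓ - 1) + (d + 1) :=
        dvd_add (dvd_sub (hk1.mul_right _) hk2) hk1
      have e : (d + 1) * (ℓ - 1) - 2 * (ℓ - 1) + (d + 1) = N := by rw [hN]; ring
      rwa [e] at this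
    have hk2r : k ∣ 2 * r := by
      have h : k ∣ (Int.gcd (2 * (d + 1)) (2 * (ℓ - 1)) : ℤ) :=
        Int.dvd_coe_gcd (hk1.mul_left 2) hk2
      rw [Int.gcd_mul_left, Int.natCast_mul] at h
      norm_num at h
      rwa [hr]
    have hkrd : k ∣ r * (d - 1) := by
      rcases Int.even_or_odd d with he | ho
      · -- d even, so d+1 odd, k odd hence coprime to 2, k ∣ r
        have h2not : ¬ (2 : ℤ) ∣ k := by
          intro h2
          have : (2 : ℤ) ∣ d + 1 := h2.trans hk1
          obtain ⟨a, ha⟩ := this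
          obtain ⟨b, hb⟩ := he
          omega
        have hcop : IsCoprime (2 : ℤ) k := (Int.prime_two.coprime_iff_not_dvd).mpr h2not
        have hkr : k ∣ r := (hcop.symm.dvd_of_dvd_mul_left hk2r)
        exact hkr.mul_right _
      · -- d odd, so 2 ∣ d - 1, 2r ∣ r(d-1)
        obtain ⟨b, hb⟩ := ho
        have : 2 * r ∣ r * (d - 1) := ⟨b, by rw [hb]; ring⟩
        exact hk2r.trans this
    exact Int.dvd_coe_gcd hkN hkrd
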